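/- For every pseudo-composition α of n, the type B ribbon number r^B_α = |{w ∈ B_n : D(w) = D(α)}| is odd. -/
import Mathlib


/-- Signed permutations of `[n]`: bijections `w` of `ℤ` with `w(-i) = -w(i)` that fix
all integers of absolute value greater than `n`.  These form the hyperoctahedral
group `Bₙ`. -/
def SignedPerms (n : ℕ) : Set (ℤ → ℤ) :=
  {w | Function.Bijective w ∧ (∀ i : ℤ, w (-i) = -w i) ∧ ∀ i : ℤ, (n : ℤ) < |i| → w i = i}

/-- The type B descent set `D(w) = {i ∈ {0,…,n-1} : w(i) > w(i+1)}` (note `w(0) = 0`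
automatically). -/
def DesB (n : ℕ) (w : ℤ → ℤ) : Set ℕ :=
  {i | i < n ∧ w ((i : ℤ) + 1) < w (i : ℤ)}

/-- A pseudo-composition of `n`: a sequence `(β₁, …, β_ℓ)` with `β₁ ≥ 0`,
`β₂, …, β_ℓ > 0` and `β₁ + ⋯ + β_ℓ = n`. -/
structure PseudoComposition (n : ℕ) where
  parts : List ℕ
  ne_nil : parts ≠ []
  tail_pos : ∀ i ∈ parts.tail, 0 < i
  sum_eq : parts.sum = n

/-- The descent set `D(β) = {β₁, β₁+β₂, …, β₁+⋯+β_{ℓ-1}} ⊆ {0,…,n-1}` of a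
pseudo-composition. -/
def DsetB {n : ℕ} (β : PseudoComposition n) : Set ℕ :=
  {m | ∃ i, 0 < i ∧ i < β.parts.length ∧ (β.parts.take i).sum = m}

/-- The type B ribbon number `r^B_α = |{w ∈ Bₙ : D(w) = D(α)}|`. -/
noncomputable def ribbonB {n : ℕ} (α : PseudoComposition n) : ℕ :=
  Set.ncard {w ∈ SignedPerms n | DesB n w = DsetB α}

open Finset

namespace RibbonAux

variable {n : ℕ}

lemma sp_zero {w : ℤ → ℤ} (hw : w ∈ SignedPerms n) : w 0 = 0 := by
  have h := hw.2.1 0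
  simp only [neg_zero] at h
  omega

lemma sp_abs_le {w : ℤ → ℤ} (hw : w ∈ SignedPerms n) {i : ℤ} (hi : |i| ≤ (n : ℤ)) :
    |w i| ≤ (n : ℤ) := by
  by_contra h
  push_neg at h
  have h1 : w (w i) = w i := hw.2.2 _ h
  have h2 : w i = i := hw.1.1 h1
  rw [h2] at h
  omega


/-- the reversing signed permutation -/
def rho (n s : ℕ) : ℤ → ℤ := fun i =>
  if (s:ℤ) < i ∧ i ≤ (n:ℤ) then i - (n + s + 1)
  else if -(n:ℤ) ≤ i ∧ i < -(s:ℤ) then i + (n + s + 1) else i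

lemma rho_invol (n s : ℕ) : Function.Involutive (rho n s) := by
  intro i
  simp only [rho]
  split_ifs <;> omega

lemma rho_neg (n s : ℕ) (i : ℤ) : rho n s (-i) = -rho n s i := by
  simp only [rho]
  split_ifs <;> omega

lemma rho_id_of (n s : ℕ) {i : ℤ} (h : (n:ℤ) < |i|) : rho n s i = i := by
  rw [lt_abs] at h
  simp only [rho]
  split_ifs <;> omega

lemma sp_comp_rho {w : ℤ → ℤ} (hw : w ∈ SignedPerms n) (s : ℕ) :
    (w ∘ rho n s) ∈ SignedPerms n := by
  refine ⟨hw.1.comp (rho_invol n s).bijective, ?_, ?_⟩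
  · intro i
    simp only [Function.comp_apply, rho_neg, hw.2.1]
  · intro i hi
    simp only [Function.comp_apply, rho_id_of n s hi]
    exact hw.2.2 i hi

/-- a signed permutation with no descents is the identity -/
lemma eq_id_of_no_descents {w : ℤ → ℤ} (hw : w ∈ SignedPerms n)
    (hD : ∀ i : ℕ, i < n → ¬ w ((i:ℤ)+1) < w (i:ℤ)) : w = id := by
  have habs : ∀ i : ℤ, |i| ≤ (n:ℤ) → |w i| ≤ (n:ℤ) := fun i hi => sp_abs_le hw hi
  have h0 : w 0 = 0 := sp_zero hw
  have mono : ∀ i : ℕ, i < n → w (i:ℤ) < w ((i:ℤ)+1) := by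
    intro i hi
    have h1 := hD i hi
    have h2 : w ((i:ℤ)+1) ≠ w (i:ℤ) := by
      intro h
      have := hw.1.1 h
      omega
    omega
  have up : ∀ i : ℕ, i ≤ n → (i:ℤ) ≤ w (i:ℤ) := by
    intro i
    induction i with
    | zero => intro _; simp [h0]
    | succ k ih =>
      intro hk
      have h1 := ih (by omega)
      have h2 := mono k (by omega)
      push_cast
      push_cast at h1 h2
      omega
  have wn : w (n:ℤ) = n := by
    have h1 := up n le_rfl
    have h2 := habs (n:ℤ) (by rw [abs_of_nonneg (by positivity)])
    rw [abs_le] at h2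
    omega
  have down : ∀ k : ℕ, k ≤ n → w ((n:ℤ) - k) ≤ (n:ℤ) - k := by
    intro k
    induction k with
    | zero => intro _; simp [wn]
    | succ k ih =>
      intro hk
      have h1 := ih (by omega)
      have hm : (n - (k+1) : ℕ) < n := by omega
      have h2 := mono (n - (k+1)) hm
      have hc : ((n - (k+1) : ℕ) : ℤ) = (n:ℤ) - (k+1) := by push_cast; omega
      rw [hc] at h2
      have hc2 : (n:ℤ) - (k+1) + 1 = (n:ℤ) - k := by ring
      rw [hc2] at h2
      push_cast
      omega
  have key : ∀ i : ℕ, i ≤ n → w (i:ℤ) = (i:ℤ) := by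
    intro i hi
    have h1 := up i hi
    have h2 := down (n - i) (by omega)
    have hc : (n:ℤ) - ((n - i : ℕ):ℤ) = (i:ℤ) := by push_cast; omega
    rw [hc] at h2
    omega
  funext i
  simp only [id_eq]
  by_cases h : (n:ℤ) < |i|
  · exact hw.2.2 i h
  · push_neg at h
    rw [abs_le] at h
    rcases le_or_gt 0 i with hi | hi
    · have : i = ((i.toNat : ℕ) : ℤ) := by omega
      rw [this]
      exact key i.toNat (by omega)
    · have h1 : w (-i) = (-i) := by
        have : -i = (((-i).toNat : ℕ) : ℤ) := by omega
        rw [this]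
        exact key (-i).toNat (by omega)
      have h2 := hw.2.1 (-i)
      rw [neg_neg] at h2
      rw [h1] at h2
      omega

lemma id_mem_sp : (id : ℤ → ℤ) ∈ SignedPerms n :=
  ⟨Function.bijective_id, fun i => by simp, fun i _ => rfl⟩

lemma sp_finite (n : ℕ) : (SignedPerms n).Finite := by
  rw [← Set.finite_coe_iff]
  let F : ↥(SignedPerms n) → (↥(Finset.Icc (-(n:ℤ)) (n:ℤ)) → ↥(Finset.Icc (-(n:ℤ)) (n:ℤ))) :=
    fun w i => ⟨w.1 i.1, by
      have hi : |i.1| ≤ (n:ℤ) := abs_le.mpr (Finset.mem_Icc.mp i.2)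
      exact Finset.mem_Icc.mpr (abs_le.mp (sp_abs_le w.2 hi))⟩
  apply Finite.of_injective F
  intro a b hab
  apply Subtype.ext
  funext i
  by_cases h : |i| ≤ (n : ℤ)
  · have hi : i ∈ Finset.Icc (-(n:ℤ)) (n:ℤ) := Finset.mem_Icc.mpr (abs_le.mp h)
    have := congrFun hab ⟨i, hi⟩
    exact congrArg Subtype.val this
  · push_neg at h
    rw [a.2.2.2 i h, b.2.2.2 i h]

noncomputable def SPF (n : ℕ) : Finset (ℤ → ℤ) := (sp_finite n).toFinset

lemma mem_SPF {w : ℤ → ℤ} : w ∈ SPF n ↔ w ∈ SignedPerms n := (sp_finite n).mem_toFinset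

def Df (n : ℕ) (w : ℤ → ℤ) : Finset ℕ := (range n).filter fun i => w ((i:ℤ)+1) < w (i:ℤ)

lemma coe_Df (n : ℕ) (w : ℤ → ℤ) : (Df n w : Set ℕ) = DesB n w := by
  ext i
  simp [Df, DesB, and_comm]

lemma odd_iff_zmod (m : ℕ) : Odd m ↔ (m : ZMod 2) = 1 := by
  rw [Nat.odd_iff]
  constructor
  · intro h; rw [← ZMod.natCast_mod, h]; rfl
  · intro h
    rcases Nat.mod_two_eq_zero_or_one m with h0 | h1
    · rw [← ZMod.natCast_mod, h0] at h; simp at h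
    · exact h1

lemma even_iff_zmod (m : ℕ) : Even m ↔ (m : ZMod 2) = 0 := by
  rw [Nat.even_iff]
  constructor
  · intro h; rw [← ZMod.natCast_mod, h]; rfl
  · intro h
    rcases Nat.mod_two_eq_zero_or_one m with h0 | h1
    · exact h0
    · rw [← ZMod.natCast_mod, h1] at h; simp at h

lemma even_card_of_invol {α : Type*} (s : Finset α) (g : α → α)
    (hmem : ∀ a ∈ s, g a ∈ s) (hinv : ∀ a ∈ s, g (g a) = a)
    (hne : ∀ a ∈ s, g a ≠ a) : Even s.card := by
  have h : ∑ _x ∈ s, (1 : ZMod 2) = 0 := by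
    apply Finset.sum_involution (fun a _ => g a)
    · intro a _; decide
    · intro a ha _; exact hne a ha
    · exact hmem
    · exact hinv
  rw [Finset.sum_const, nsmul_eq_mul, mul_one] at h
  rw [even_iff_zmod]
  exact h


lemma filter_empty_eq_id (n : ℕ) :
    (SPF n).filter (fun w => Df n w = (∅ : Finset ℕ)) = {(id : ℤ → ℤ)} := by
  ext w
  simp only [Finset.mem_filter, Finset.mem_singleton, mem_SPF]
  constructor
  · rintro ⟨hw, hD⟩
    apply eq_id_of_no_descents hw
    intro i hi hlt
    have : i ∈ Df n w := by
      simp only [Df, Finset.mem_filter, Finset.mem_range]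
      exact ⟨hi, hlt⟩
    rw [hD] at this
    simp at this
  · rintro rfl
    refine ⟨id_mem_sp, ?_⟩
    simp only [Df, id_eq]
    rw [Finset.filter_eq_empty_iff]
    intro i _
    omega

lemma even_b {T : Finset ℕ} (hT : T ⊆ range n) (hne : T.Nonempty) :
    Even ((SPF n).filter (fun w => Df n w ⊆ T)).card := by
  set s := T.max' hne with hsdef
  have hsT : s ∈ T := T.max'_mem hne
  have hs : s < n := Finset.mem_range.mp (hT hsT)
  apply even_card_of_invol _ (fun w => w ∘ rho n s)
  · intro w hw
    rw [Finset.mem_filter] at hw ⊢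
    obtain ⟨hw1, hw2⟩ := hw
    rw [mem_SPF] at hw1
    refine ⟨mem_SPF.mpr (sp_comp_rho hw1 s), ?_⟩
    intro i hi
    simp only [Df, Finset.mem_filter, Finset.mem_range, Function.comp_apply] at hi
    obtain ⟨hin, hdes⟩ := hi
    by_contra hiT
    have hine : i ≠ s := fun h => hiT (h ▸ hsT)
    rcases lt_or_gt_of_ne hine with hlt | hgt
    · have hcast : (i:ℤ) < (s:ℤ) := by exact_mod_cast hlt
      have e1 : rho n s (i:ℤ) = (i:ℤ) := by
        simp only [rho]; split_ifs <;> omega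
      have e2 : rho n s ((i:ℤ)+1) = (i:ℤ)+1 := by
        simp only [rho]; split_ifs <;> omega
      rw [e1, e2] at hdes
      have : i ∈ Df n w := by
        simp only [Df, Finset.mem_filter, Finset.mem_range]
        exact ⟨hin, hdes⟩
      exact hiT (hw2 this)
    · set k : ℕ := n + s - i with hk
      have hki : (k:ℤ) = (n:ℤ) + s - i := by
        have : i ≤ n + s := by omega
        push_cast [hk]
        omega
      have hcast : (s:ℤ) < (i:ℤ) := by exact_mod_cast hgt
      have hcn : (i:ℤ) < (n:ℤ) := by exact_mod_cast hin
      have e1 : rho n s (i:ℤ) = -((k:ℤ)+1) := by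
        simp only [rho]; split_ifs <;> omega
      have e2 : rho n s ((i:ℤ)+1) = -(k:ℤ) := by
        simp only [rho]; split_ifs <;> omega
      rw [e1, e2] at hdes
      have o1 := hw1.2.1 (k:ℤ)
      have o2 := hw1.2.1 ((k:ℤ)+1)
      rw [show -((k:ℤ)+1) = -((k:ℤ)+1) from rfl] at hdes
      have hdes2 : w ((k:ℤ)+1) < w (k:ℤ) := by
        have h1 : w (-(k:ℤ)) = -w (k:ℤ) := o1
        have h2 : w (-((k:ℤ)+1)) = -w ((k:ℤ)+1) := o2
        rw [h1, h2] at hdes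
        omega
      have hkT : k ∈ T := by
        apply hw2
        simp only [Df, Finset.mem_filter, Finset.mem_range]
        exact ⟨by omega, hdes2⟩
      have := Finset.le_max' T k hkT
      omega
  · intro w _
    funext i
    simp [rho_invol n s i]
  · intro w hw
    rw [Finset.mem_filter, mem_SPF] at hw
    intro h
    have hco := congrFun h (n:ℤ)
    simp only [Function.comp_apply] at hco
    have hrn : rho n s (n:ℤ) = (n:ℤ) - ((n:ℤ)+s+1) := by
      simp only [rho]
      split_ifs with h1 h2
      · ring
      · omega
      · omega
    have := hw.1.1.1 hco
    rw [hrn] at this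
    omega

lemma b_decomp (T : Finset ℕ) :
    ((SPF n).filter (fun w => Df n w ⊆ T)).card
      = ∑ T' ∈ T.powerset, ((SPF n).filter (fun w => Df n w = T')).card := by
  rw [Finset.card_eq_sum_card_fiberwise
    (f := Df n) (t := T.powerset)
    (fun w hw => Finset.mem_powerset.mpr (Finset.mem_filter.mp hw).2)]
  apply Finset.sum_congr rfl
  intro T' hT'
  congr 1
  rw [Finset.filter_filter]
  apply Finset.filter_congr
  intro w _
  constructor
  · rintro ⟨_, h⟩; exact h
  · intro h; exact ⟨h ▸ Finset.mem_powerset.mp hT', h⟩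

lemma R_odd (n : ℕ) : ∀ T : Finset ℕ, T ⊆ range n →
    Odd ((SPF n).filter (fun w => Df n w = T)).card := by
  intro T
  induction T using Finset.strongInduction with
  | _ T ih =>
    intro hT
    rcases T.eq_empty_or_nonempty with rfl | hne
    · rw [filter_empty_eq_id]
      simp
    · rw [odd_iff_zmod]
      have heven := even_b hT hne
      rw [even_iff_zmod, b_decomp] at heven
      push_cast at heven
      rw [← Finset.add_sum_erase _ _ (Finset.mem_powerset_self T)] at heven
      have hsum : ∑ T' ∈ T.powerset.erase T,
          ((((SPF n).filter (fun w => Df n w = T')).card : ZMod 2)) = 1 := by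
        rw [Finset.sum_congr rfl (fun T' hT' => ?_)]
        · rw [Finset.sum_const, nsmul_eq_mul, mul_one]
          have hcardp : (T.powerset.erase T).card + 1 = 2 ^ T.card := by
            rw [Finset.card_erase_of_mem (Finset.mem_powerset_self T), Finset.card_powerset]
            have := Nat.one_le_two_pow (n := T.card)
            omega
          have hk : T.card ≠ 0 := by
            simp only [ne_eq, Finset.card_eq_zero]
            exact hne.ne_empty
          have hevenp : Even (2 ^ T.card) := (Nat.even_pow).mpr ⟨even_two, hk⟩
          have hodd : Odd (T.powerset.erase T).card := by
            rw [Nat.odd_iff]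
            rw [Nat.even_iff] at hevenp
            omega
          exact (odd_iff_zmod _).mp hodd
        · rw [Finset.mem_erase] at hT'
          have hsub : T' ⊂ T := lt_of_le_of_ne (Finset.mem_powerset.mp hT'.2) hT'.1
          exact (odd_iff_zmod _).mp (ih T' hsub (hsub.subset.trans hT))
      rw [hsum] at heven
      have := eq_neg_of_add_eq_zero_left heven
      rw [this]
      decide

lemma Dset_subset {n : ℕ} (α : PseudoComposition n) : DsetB α ⊆ ↑(Finset.range n) := by
  rintro m ⟨i, hi0, hilen, hsum⟩
  simp only [Finset.coe_range, Set.mem_Iio]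
  have hsplit : (α.parts.take i).sum + (α.parts.drop i).sum = n := by
    rw [← List.sum_append, List.take_append_drop, α.sum_eq]
  have hdeq : α.parts.drop i = (α.parts.tail).drop (i - 1) := by
    rw [← List.drop_one, List.drop_drop]
    congr 1
    omega
  have hne : α.parts.drop i ≠ [] := by
    intro h
    have := List.drop_eq_nil_iff.mp h
    omega
  obtain ⟨x, hx⟩ := List.exists_mem_of_ne_nil _ hne
  have hxpos : 0 < x := by
    apply α.tail_pos
    rw [hdeq] at hx
    exact List.mem_of_mem_drop hx
  have hxle : x ≤ (α.parts.drop i).sum :=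
    List.single_le_sum (fun y _ => Nat.zero_le y) x hx
  omega

end RibbonAux


/-- Every type B ribbon number is odd. -/
theorem ribbonB_odd {n : ℕ} (α : PseudoComposition n) : Odd (ribbonB α) := by
  classical
  open RibbonAux in
  have hsub := RibbonAux.Dset_subset α
  have hfin : (DsetB α).Finite := Set.Finite.subset (Finset.range n).finite_toSet hsub
  set T := hfin.toFinset with hTdef
  have hcoe : ↑T = DsetB α := hfin.coe_toFinset
  have hTsub : T ⊆ Finset.range n := by
    intro x hx
    have h1 : x ∈ DsetB α := by rw [← hcoe] at *; exact hx
    have := hsub h1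
    exact_mod_cast this
  have hset : {w ∈ SignedPerms n | DesB n w = DsetB α}
      = ↑((RibbonAux.SPF n).filter (fun w => RibbonAux.Df n w = T)) := by
    ext w
    simp only [Set.mem_setOf_eq, Finset.mem_coe, Finset.mem_filter, RibbonAux.mem_SPF]
    constructor
    · rintro ⟨hw, hD⟩
      refine ⟨hw, ?_⟩
      apply Finset.coe_injective
      rw [RibbonAux.coe_Df, hcoe, hD]
    · rintro ⟨hw, hD⟩
      refine ⟨hw, ?_⟩
      rw [← RibbonAux.coe_Df, hD, hcoe]
  rw [ribbonB, hset, Set.ncard_coe_finset]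
  exact RibbonAux.R_odd n T hTsub
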